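/- Every collection C of positive operators on ℓ_p, 1 < p < ∞, which is finitely quasinilpotent at a non-zero positive vector, has a non-trivial closed common invariant (order) ideal. -/

import Mathlib

open Filter

/-- A collection `C` of operators is finitely quasinilpotent at `x` if for every finite
subcollection `F ⊆ C`, `limsup_n ‖F^n x‖^{1/n} = 0`. -/
def FinitelyQuasinilpotentAt {X : Type*} [NormedAddCommGroup X] [NormedSpace ℝ X]
    (C : Set (X →L[ℝ] X)) (x : X) : Prop :=
  ∀ F : Finset (X →L[ℝ] X), ↑F ⊆ C →
    Filter.limsup (fun n : ℕ =>
      (⨆ g : Fin n → F, ‖(List.ofFn fun i => (g i : X →L[ℝ] X)).prod x‖) ^ ((n : ℝ)⁻¹))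
      atTop = 0

private theorem aux_lower {c a : ℝ} (hc : 0 < c) (ha : 0 < a) (n L : ℕ)
    (hn : 1 ≤ n) (hL : 1 ≤ L) (m : ℕ) (hm : m = n * L) :
    min c 1 * a ^ ((L : ℝ)⁻¹) ≤ (c * a ^ n) ^ ((m : ℝ)⁻¹) := by
  have hn0 : (0:ℝ) < (n:ℝ) := by exact_mod_cast hn
  have hL0 : (0:ℝ) < (L:ℝ) := by exact_mod_cast hL
  have hm0 : (0:ℝ) < (m:ℝ) := by
    rw [hm]; push_cast; positivity
  set t : ℝ := ((m : ℝ))⁻¹ with ht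
  have ht0 : 0 < t := by positivity
  have ht1 : t ≤ 1 := by
    rw [ht]
    have : (1:ℝ) ≤ (m:ℝ) := by
      rw [hm]; exact_mod_cast Nat.one_le_iff_ne_zero.2 (by positivity)
    exact inv_le_one_of_one_le₀ this
  have hsplit : (c * a ^ n) ^ t = c ^ t * (a ^ n) ^ t :=
    Real.mul_rpow hc.le (pow_nonneg ha.le n)
  have hpow : (a ^ n : ℝ) ^ t = a ^ ((L : ℝ)⁻¹) := by
    rw [← Real.rpow_natCast a n, ← Real.rpow_mul ha.le]
    congr 1
    rw [ht, hm]
    push_cast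
    field_simp
  have hct : min c 1 ≤ c ^ t := by
    have hmc0 : 0 < min c 1 := lt_min hc zero_lt_one
    have h1 : min c 1 ≤ (min c 1) ^ t := by
      have := Real.rpow_le_rpow_of_exponent_ge hmc0 (min_le_right c 1) ht1
      rwa [Real.rpow_one] at this
    exact h1.trans (Real.rpow_le_rpow hmc0.le (min_le_left c 1) ht0.le)
  rw [hsplit, hpow]
  exact mul_le_mul_of_nonneg_right hct (Real.rpow_nonneg ha.le _)

private theorem aux_upper {M r : ℝ} (hM : 1 ≤ M) (hr : 0 ≤ r) (m : ℕ) (hm : 1 ≤ m) :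
    (M ^ m * r) ^ ((m : ℝ)⁻¹) ≤ M * max r 1 := by
  have hm0 : (0:ℝ) < (m:ℝ) := by exact_mod_cast hm
  have hM0 : (0:ℝ) < M := lt_of_lt_of_le zero_lt_one hM
  have ht0 : (0:ℝ) ≤ ((m:ℝ))⁻¹ := by positivity
  have hsplit : (M ^ m * r) ^ ((m:ℝ)⁻¹) = (M ^ m) ^ ((m:ℝ)⁻¹) * r ^ ((m:ℝ)⁻¹) :=
    Real.mul_rpow (pow_nonneg hM0.le m) hr
  have h1 : (M ^ m : ℝ) ^ ((m:ℝ)⁻¹) = M := by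
    rw [← Real.rpow_natCast M m, ← Real.rpow_mul hM0.le, mul_inv_cancel₀ hm0.ne',
      Real.rpow_one]
  have h2 : r ^ ((m:ℝ)⁻¹) ≤ max r 1 := by
    rcases le_total r 1 with h | h
    · exact le_trans (Real.rpow_le_one hr h ht0) (le_max_right r 1)
    · refine le_trans ?_ (le_max_left r 1)
      have := Real.rpow_le_rpow_of_exponent_le h
        (inv_le_one_of_one_le₀ (by exact_mod_cast hm : (1:ℝ) ≤ (m:ℝ)))
      rwa [Real.rpow_one] at this
  rw [hsplit, h1]
  exact mul_le_mul_of_nonneg_left h2 hM0.le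

private theorem list_prod_le_pow {M : ℝ} :
    ∀ l : List ℝ, (∀ x ∈ l, x ≤ M) → (∀ x ∈ l, 0 ≤ x) → l.prod ≤ M ^ l.length := by
  intro l
  induction l with
  | nil => simp
  | cons a l ih =>
    intro h1 h2
    have hM : 0 ≤ M := le_trans (h2 a (List.mem_cons_self)) (h1 a (List.mem_cons_self))
    have hl : l.prod ≤ M ^ l.length :=
      ih (fun x hx => h1 x (List.mem_cons_of_mem _ hx))
        (fun x hx => h2 x (List.mem_cons_of_mem _ hx))
    have hlpos : 0 ≤ l.prod := List.prod_nonneg (fun x hx => h2 x (List.mem_cons_of_mem _ hx))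
    rw [List.prod_cons, List.length_cons, pow_succ']
    exact mul_le_mul (h1 a (List.mem_cons_self)) hl hlpos hM

section Aux

variable (p : ENNReal) [Fact (1 ≤ p)]

private theorem hp_ne_zero : p ≠ 0 := (zero_lt_one.trans_le (Fact.out : 1 ≤ p)).ne'

/-- Coordinate evaluation as a continuous linear functional on `ℓ^p`. -/
noncomputable def evalCLM (k : ℕ) : lp (fun _ : ℕ => ℝ) p →L[ℝ] ℝ :=
  LinearMap.mkContinuous
    { toFun := fun y => y k
      map_add' := fun x y => by simp [lp.coeFn_add]
      map_smul' := fun c x => by simp [lp.coeFn_smul] }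
    1 (fun y => by
      show ‖(y : ℕ → ℝ) k‖ ≤ 1 * ‖y‖
      simpa using lp.norm_apply_le_norm (hp_ne_zero p) y k)

@[simp] theorem evalCLM_apply (k : ℕ) (y : lp (fun _ : ℕ => ℝ) p) :
    evalCLM p k y = y k := rfl

end Aux

set_option maxHeartbeats 1000000 in
/-- Every collection of positive operators on `ℓ_p`, `1 < p < ∞`, which is finitely
quasinilpotent at a non-zero positive vector, has a non-trivial closed common invariant
order ideal. Here the order on `ℓ_p` is coordinatewise. -/
theorem invariant_ideal_lp (p : ENNReal) [Fact (1 ≤ p)] (hp : 1 < p) (hp' : p ≠ ⊤)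
    (C : Set (lp (fun _ : ℕ => ℝ) p →L[ℝ] lp (fun _ : ℕ => ℝ) p))
    (hpos : ∀ T ∈ C, ∀ x : lp (fun _ : ℕ => ℝ) p,
      (∀ i, 0 ≤ x i) → ∀ i, 0 ≤ (T x) i)
    (x₀ : lp (fun _ : ℕ => ℝ) p) (hx₀ : x₀ ≠ 0) (hx₀pos : ∀ i, 0 ≤ x₀ i)
    (hqn : FinitelyQuasinilpotentAt C x₀) :
    ∃ J : Submodule ℝ (lp (fun _ : ℕ => ℝ) p),
      IsClosed (J : Set (lp (fun _ : ℕ => ℝ) p)) ∧ J ≠ ⊥ ∧ J ≠ ⊤ ∧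
      (∀ x y : lp (fun _ : ℕ => ℝ) p, (∀ i, |x i| ≤ |y i|) → y ∈ J → x ∈ J) ∧
      (∀ T ∈ C, ∀ z ∈ J, T z ∈ J) := by
  classical
  have hp0 : p ≠ 0 := hp_ne_zero p
  -- basic coordinate lemmas
  have coord_le_norm : ∀ (y : lp (fun _ : ℕ => ℝ) p) (k : ℕ), |y k| ≤ ‖y‖ := fun y k => by
    simpa using lp.norm_apply_le_norm hp0 y k
  have coord_sub : ∀ (u v : lp (fun _ : ℕ => ℝ) p) (k : ℕ), (u - v) k = u k - v k :=
    fun u v k => by rw [lp.coeFn_sub]; rfl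
  have coord_smul : ∀ (c : ℝ) (u : lp (fun _ : ℕ => ℝ) p) (k : ℕ), (c • u) k = c * u k :=
    fun c u k => by rw [lp.coeFn_smul]; rfl
  -- a coordinate where x₀ is positive
  obtain ⟨i₀, hi₀⟩ : ∃ i, 0 < x₀ i := by
    by_contra h
    push_neg at h
    refine hx₀ (lp.ext ?_)
    rw [lp.coeFn_zero]
    funext i
    exact le_antisymm (h i) (hx₀pos i)
  -- basis vectors
  set e : ℕ → lp (fun _ : ℕ => ℝ) p := fun j => lp.single p j (1 : ℝ) with he
  have e_apply_self : ∀ j, e j j = 1 := fun j => lp.single_apply_self p j 1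
  have e_apply_ne : ∀ j k, k ≠ j → e j k = 0 := fun j k h => lp.single_apply_ne p j 1 h
  have e_nonneg : ∀ j k, 0 ≤ e j k := by
    intro j k
    by_cases h : k = j
    · subst h; rw [e_apply_self]; norm_num
    · rw [e_apply_ne j k h]
  -- word machinery
  have prod_cons_apply : ∀ (T : lp (fun _ : ℕ => ℝ) p →L[ℝ] lp (fun _ : ℕ => ℝ) p)
      (W : List (lp (fun _ : ℕ => ℝ) p →L[ℝ] lp (fun _ : ℕ => ℝ) p))
      (u : lp (fun _ : ℕ => ℝ) p), ((T :: W).prod) u = T (W.prod u) := by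
    intro T W u
    rw [List.prod_cons, ContinuousLinearMap.mul_apply]
  have wordPos : ∀ W : List (lp (fun _ : ℕ => ℝ) p →L[ℝ] lp (fun _ : ℕ => ℝ) p),
      (∀ T ∈ W, T ∈ C) → ∀ u : lp (fun _ : ℕ => ℝ) p,
      (∀ i, 0 ≤ u i) → ∀ i, 0 ≤ (W.prod u) i := by
    intro W
    induction W with
    | nil =>
      intro _ u hu i
      simpa [List.prod_nil, ContinuousLinearMap.one_apply] using hu i
    | cons T W ih =>
      intro hW u hu i
      rw [prod_cons_apply]
      exact hpos T (hW T (List.mem_cons_self)) _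
        (ih (fun S hS => hW S (List.mem_cons_of_mem T hS)) u hu) i
  have wordMono : ∀ W : List (lp (fun _ : ℕ => ℝ) p →L[ℝ] lp (fun _ : ℕ => ℝ) p),
      (∀ T ∈ W, T ∈ C) → ∀ u v : lp (fun _ : ℕ => ℝ) p,
      (∀ i, u i ≤ v i) → ∀ i, (W.prod u) i ≤ (W.prod v) i := by
    intro W hW u v huv i
    have h1 := wordPos W hW (v - u) (fun j => by rw [coord_sub]; exact sub_nonneg.2 (huv j)) i
    have h2 : W.prod (v - u) = W.prod v - W.prod u := map_sub _ _ _
    rw [h2, coord_sub] at h1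
    linarith
  -- positive vectors dominate coordinate multiples of basis vectors
  have dom : ∀ u : lp (fun _ : ℕ => ℝ) p, (∀ i, 0 ≤ u i) → ∀ j i, ((u j) • e j) i ≤ u i := by
    intro u hu j i
    rw [coord_smul]
    by_cases h : i = j
    · subst h; rw [e_apply_self, mul_one]
    · rw [e_apply_ne j i h, mul_zero]; exact hu i
  have wordStep : ∀ W : List (lp (fun _ : ℕ => ℝ) p →L[ℝ] lp (fun _ : ℕ => ℝ) p),
      (∀ T ∈ W, T ∈ C) → ∀ u : lp (fun _ : ℕ => ℝ) p, (∀ i, 0 ≤ u i) →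
      ∀ j k, u j * (W.prod (e j)) k ≤ (W.prod u) k := by
    intro W hW u hu j k
    have h := wordMono W hW ((u j) • e j) u (dom u hu j) k
    rwa [map_smul, coord_smul] at h
  -- reachability from e i₀
  set Sreach : Set ℕ :=
    {k | ∃ W : List (lp (fun _ : ℕ => ℝ) p →L[ℝ] lp (fun _ : ℕ => ℝ) p),
      (∀ T ∈ W, T ∈ C) ∧ (W.prod (e i₀)) k ≠ 0} with hSreach
  have hi₀S : i₀ ∈ Sreach := by
    refine ⟨[], by simp, ?_⟩
    rw [List.prod_nil, ContinuousLinearMap.one_apply, e_apply_self]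
    norm_num
  -- no nonempty word can return positively to i₀ (else contradiction with hqn)
  have no_cycle : ¬ ∃ W : List (lp (fun _ : ℕ => ℝ) p →L[ℝ] lp (fun _ : ℕ => ℝ) p),
      W ≠ [] ∧ (∀ T ∈ W, T ∈ C) ∧ 0 < (W.prod (e i₀)) i₀ := by
    rintro ⟨W, hWne, hWC, hWcyc⟩
    set A := W.prod with hA
    set a : ℝ := (A (e i₀)) i₀ with ha
    have ha0 : 0 < a := hWcyc
    set c : ℝ := x₀ i₀ with hc
    have hc0 : 0 < c := hi₀
    set L := W.length with hL
    have hL1 : 1 ≤ L := List.length_pos_iff.2 hWne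
    set F : Finset (lp (fun _ : ℕ => ℝ) p →L[ℝ] lp (fun _ : ℕ => ℝ) p) := W.toFinset with hF
    have hFC : ↑F ⊆ C := fun T hT => hWC T (List.mem_toFinset.1 hT)
    haveI hFne : Nonempty ↥F := by
      rcases List.exists_mem_of_ne_nil W hWne with ⟨T, hT⟩
      exact ⟨⟨T, List.mem_toFinset.2 hT⟩⟩
    set f : ℕ → ℝ := fun n : ℕ =>
      (⨆ g : Fin n → F, ‖(List.ofFn fun i => (g i : lp (fun _ : ℕ => ℝ) p →L[ℝ]
        lp (fun _ : ℕ => ℝ) p)).prod x₀‖) ^ ((n : ℝ)⁻¹) with hfdef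
    have key : Filter.limsup f atTop = 0 := hqn F hFC
    -- iterates of A
    have repl : ∀ n : ℕ, (List.flatten (List.replicate n W)).prod = A ^ n := by
      intro n
      rw [List.prod_flatten, List.map_replicate, List.prod_replicate]
    have repl_len : ∀ n : ℕ, (List.flatten (List.replicate n W)).length = n * L := by
      intro n
      rw [List.length_flatten, List.map_replicate, List.sum_replicate, smul_eq_mul]
    have repl_mem : ∀ n : ℕ, ∀ T ∈ List.flatten (List.replicate n W), T ∈ W := by
      intro n T hT
      rcases List.mem_flatten.1 hT with ⟨l, hl, hTl⟩
      rwa [List.eq_of_mem_replicate hl] at hTl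
    have hApow : ∀ n : ℕ, ∀ i, 0 ≤ ((A ^ n) x₀) i := by
      intro n i
      have h := wordPos (List.flatten (List.replicate n W))
        (fun T hT => hWC T (repl_mem n T hT)) x₀ hx₀pos i
      rwa [repl n] at h
    have lower : ∀ n : ℕ, c * a ^ n ≤ ((A ^ n) x₀) i₀ := by
      intro n
      induction n with
      | zero => simp [pow_zero, ContinuousLinearMap.one_apply, c]
      | succ n ih =>
        have hstep := wordStep W hWC ((A ^ n) x₀) (hApow n) i₀ i₀
        have h2 : A ((A ^ n) x₀) = (A ^ (n + 1)) x₀ := by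
          rw [pow_succ', ContinuousLinearMap.mul_apply]
        rw [h2] at hstep
        calc c * a ^ (n + 1) = (c * a ^ n) * a := by ring
          _ ≤ ((A ^ n) x₀) i₀ * a := mul_le_mul_of_nonneg_right ih ha0.le
          _ ≤ ((A ^ (n + 1)) x₀) i₀ := hstep
    -- realizing any F-valued list in the supremum
    have exists_g : ∀ V : List (lp (fun _ : ℕ => ℝ) p →L[ℝ] lp (fun _ : ℕ => ℝ) p),
        (∀ T ∈ V, T ∈ F) → ∃ g : Fin V.length → ↥F,
          (List.ofFn fun i => (g i : lp (fun _ : ℕ => ℝ) p →L[ℝ] lp (fun _ : ℕ => ℝ) p)) = V := by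
      intro V hV
      exact ⟨fun i => ⟨V.get i, hV _ (List.get_mem V i)⟩, List.ofFn_get V⟩
    set b : ℝ := min c 1 * a ^ ((L : ℝ)⁻¹) with hb
    have hb0 : 0 < b :=
      mul_pos (lt_min hc0 zero_lt_one) (Real.rpow_pos_of_pos ha0 _)
    have freq : ∃ᶠ m in atTop, b ≤ f m := by
      rw [Filter.frequently_atTop]
      intro N
      refine ⟨(List.flatten (List.replicate (N + 1) W)).length, ?_, ?_⟩
      · rw [repl_len]
        calc N ≤ N + 1 := Nat.le_succ N
          _ = (N + 1) * 1 := (mul_one _).symm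
          _ ≤ (N + 1) * L := Nat.mul_le_mul_left _ hL1
      · obtain ⟨g, hg⟩ := exists_g (List.flatten (List.replicate (N + 1) W))
          (fun T hT => List.mem_toFinset.2 (repl_mem (N + 1) T hT))
        have hnorm : c * a ^ (N + 1) ≤ ‖(List.flatten (List.replicate (N + 1) W)).prod x₀‖ := by
          have h1 : c * a ^ (N + 1) ≤ ((List.flatten (List.replicate (N + 1) W)).prod x₀) i₀ := by
            rw [repl (N + 1)]; exact lower (N + 1)
          exact h1.trans ((le_abs_self _).trans (coord_le_norm _ _))
        have hbdd : BddAbove (Set.range fun g : Fin (List.flatten (List.replicate (N + 1) W)).length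
            → ↥F => ‖(List.ofFn fun i => (g i : lp (fun _ : ℕ => ℝ) p →L[ℝ]
              lp (fun _ : ℕ => ℝ) p)).prod x₀‖) :=
          Set.Finite.bddAbove (Set.finite_range _)
        have hsup : c * a ^ (N + 1) ≤ ⨆ g : Fin (List.flatten (List.replicate (N + 1) W)).length →
            ↥F, ‖(List.ofFn fun i => (g i : lp (fun _ : ℕ => ℝ) p →L[ℝ]
              lp (fun _ : ℕ => ℝ) p)).prod x₀‖ := by
          refine le_trans ?_ (le_ciSup hbdd g)
          rw [hg]
          exact hnorm
        have hca : (0 : ℝ) ≤ c * a ^ (N + 1) := le_of_lt (mul_pos hc0 (pow_pos ha0 _))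
        have hfm : (c * a ^ (N + 1)) ^
            (((List.flatten (List.replicate (N + 1) W)).length : ℝ)⁻¹) ≤
            f (List.flatten (List.replicate (N + 1) W)).length :=
          Real.rpow_le_rpow hca hsup (by positivity)
        refine le_trans ?_ hfm
        exact aux_lower hc0 ha0 (N + 1) L (Nat.le_add_left 1 N) hL1 _ (repl_len (N + 1))
    have bdd : IsBoundedUnder (· ≤ ·) atTop f := by
      set M : ℝ := 1 + ∑ T ∈ F, ‖T‖ with hM
      have hM1 : 1 ≤ M :=
        le_add_of_nonneg_right (Finset.sum_nonneg fun _ _ => norm_nonneg _)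
      have hMT : ∀ T ∈ F, ‖T‖ ≤ M := fun T hT =>
        le_trans (Finset.single_le_sum (fun S _ => norm_nonneg S) hT)
          (le_add_of_nonneg_left zero_le_one)
      refine isBoundedUnder_of ⟨M * max ‖x₀‖ 1, fun m => ?_⟩
      rcases Nat.eq_zero_or_pos m with hm | hm
      · subst hm
        have : f 0 = 1 := by
          rw [hfdef]
          norm_num
        rw [this]
        calc (1:ℝ) = 1 * 1 := (one_mul 1).symm
          _ ≤ M * max ‖x₀‖ 1 :=
            mul_le_mul hM1 (le_max_right _ _) zero_le_one (le_trans zero_le_one hM1)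
      · have hword : ∀ g : Fin m → ↥F,
            ‖(List.ofFn fun i => (g i : lp (fun _ : ℕ => ℝ) p →L[ℝ]
              lp (fun _ : ℕ => ℝ) p)).prod x₀‖ ≤ M ^ m * ‖x₀‖ := by
          intro g
          set V : List (lp (fun _ : ℕ => ℝ) p →L[ℝ] lp (fun _ : ℕ => ℝ) p) :=
            List.ofFn fun i => (g i : lp (fun _ : ℕ => ℝ) p →L[ℝ] lp (fun _ : ℕ => ℝ) p)
            with hV
          have hVlen : V.length = m := by rw [hV, List.length_ofFn]
          have hVne : V ≠ [] := by
            intro h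
            rw [h] at hVlen
            simp at hVlen
            omega
          have h1 : ‖V.prod x₀‖ ≤ ‖V.prod‖ * ‖x₀‖ := ContinuousLinearMap.le_opNorm _ _
          have h2 : ‖V.prod‖ ≤ (V.map norm).prod := List.norm_prod_le' hVne
          have h3 : (V.map norm).prod ≤ M ^ m := by
            have := list_prod_le_pow (M := M) (V.map norm) ?_ ?_
            · rwa [List.length_map, hVlen] at this
            · intro x hx
              rcases List.mem_map.1 hx with ⟨T, hTV, rfl⟩
              rw [hV] at hTV
              obtain ⟨i, rfl⟩ := List.mem_ofFn.1 hTV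
              exact hMT _ (g i).2
            · intro x hx
              rcases List.mem_map.1 hx with ⟨T, _, rfl⟩
              exact norm_nonneg T
          calc ‖V.prod x₀‖ ≤ ‖V.prod‖ * ‖x₀‖ := h1
            _ ≤ (V.map norm).prod * ‖x₀‖ :=
              mul_le_mul_of_nonneg_right h2 (norm_nonneg x₀)
            _ ≤ M ^ m * ‖x₀‖ :=
              mul_le_mul_of_nonneg_right h3 (norm_nonneg x₀)
        have hsup_le : (⨆ g : Fin m → ↥F, ‖(List.ofFn fun i =>
            (g i : lp (fun _ : ℕ => ℝ) p →L[ℝ] lp (fun _ : ℕ => ℝ) p)).prod x₀‖) ≤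
            M ^ m * ‖x₀‖ := ciSup_le hword
        have hsup_nonneg : 0 ≤ ⨆ g : Fin m → ↥F, ‖(List.ofFn fun i =>
            (g i : lp (fun _ : ℕ => ℝ) p →L[ℝ] lp (fun _ : ℕ => ℝ) p)).prod x₀‖ := by
          obtain ⟨g⟩ : Nonempty (Fin m → ↥F) := inferInstance
          have hgle := le_ciSup (f := fun g : Fin m → ↥F => ‖(List.ofFn fun i =>
            (g i : lp (fun _ : ℕ => ℝ) p →L[ℝ] lp (fun _ : ℕ => ℝ) p)).prod x₀‖)
            (Set.Finite.bddAbove (Set.finite_range _)) g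
          exact le_trans (norm_nonneg _) hgle
        calc f m ≤ (M ^ m * ‖x₀‖) ^ ((m : ℝ)⁻¹) :=
            Real.rpow_le_rpow hsup_nonneg hsup_le (by positivity)
          _ ≤ M * max ‖x₀‖ 1 := aux_upper hM1 (norm_nonneg x₀) m hm
    have hle : b ≤ Filter.limsup f atTop := le_limsup_of_frequently_le freq bdd
    rw [key] at hle
    exact absurd hle (not_le.2 hb0)
  -- generic construction of the invariant ideal from a set of coordinates
  have build : ∀ A : Set ℕ, (∀ k ∈ A, ∀ j ∉ A, ∀ T ∈ C, (T (e j)) k = 0) →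
      ∀ k₁, k₁ ∈ A → ∀ k₂, k₂ ∉ A →
      ∃ J : Submodule ℝ (lp (fun _ : ℕ => ℝ) p),
        IsClosed (J : Set (lp (fun _ : ℕ => ℝ) p)) ∧ J ≠ ⊥ ∧ J ≠ ⊤ ∧
        (∀ x y : lp (fun _ : ℕ => ℝ) p, (∀ i, |x i| ≤ |y i|) → y ∈ J → x ∈ J) ∧
        (∀ T ∈ C, ∀ z ∈ J, T z ∈ J) := by
    intro A hrow k₁ hk₁ k₂ hk₂
    refine ⟨{ carrier := {y : lp (fun _ : ℕ => ℝ) p | ∀ k ∈ A, y k = 0}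
              add_mem' := ?_
              zero_mem' := ?_
              smul_mem' := ?_ }, ?_, ?_, ?_, ?_, ?_⟩
    · intro u v hu hv k hk
      show (u + v) k = 0
      rw [lp.coeFn_add, Pi.add_apply, hu k hk, hv k hk, add_zero]
    · intro k hk
      show (0 : lp (fun _ : ℕ => ℝ) p) k = 0
      rw [lp.coeFn_zero]
      rfl
    · intro cc u hu k hk
      show (cc • u) k = 0
      rw [lp.coeFn_smul, Pi.smul_apply, hu k hk, smul_zero]
    · -- closed
      have hset : ({y : lp (fun _ : ℕ => ℝ) p | ∀ k ∈ A, y k = 0} : Set _) =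
          ⋂ k ∈ A, (evalCLM p k) ⁻¹' {0} := by
        ext y
        simp [Set.mem_iInter]
      show IsClosed ({y : lp (fun _ : ℕ => ℝ) p | ∀ k ∈ A, y k = 0} : Set _)
      rw [hset]
      exact isClosed_biInter fun k _ => isClosed_singleton.preimage (evalCLM p k).continuous
    · -- ≠ ⊥
      intro hbot
      have h1 : ∀ k ∈ A, e k₂ k = 0 := fun k hk =>
        e_apply_ne k₂ k (fun hkk => hk₂ (hkk ▸ hk))
      have h2 : e k₂ ∈ (⊥ : Submodule ℝ (lp (fun _ : ℕ => ℝ) p)) := by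
        rw [← hbot]; exact h1
      rw [Submodule.mem_bot] at h2
      have h3 := e_apply_self k₂
      rw [h2, lp.coeFn_zero] at h3
      exact one_ne_zero h3.symm
    · -- ≠ ⊤
      intro htop
      have h1 : e k₁ ∈ ({y : lp (fun _ : ℕ => ℝ) p | ∀ k ∈ A, y k = 0} : Set _) := by
        have : e k₁ ∈ (⊤ : Submodule ℝ (lp (fun _ : ℕ => ℝ) p)) := Submodule.mem_top
        rw [← htop] at this
        exact this
      have h2 := h1 k₁ hk₁
      rw [e_apply_self k₁] at h2
      exact one_ne_zero h2
    · -- solid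
      intro x y hxy hy k hk
      have h1 := hxy k
      rw [hy k hk, abs_zero] at h1
      exact abs_eq_zero.1 (le_antisymm h1 (abs_nonneg _))
    · -- invariant
      intro T hT z hz k hk
      show (T z) k = 0
      have hsum := ((lp.hasSum_single hp' z).mapL ((evalCLM p k).comp T))
      have hterm : ∀ j : ℕ, ((evalCLM p k).comp T) (lp.single p j (z j)) = 0 := by
        intro j
        have hsingle : lp.single p j (z j) = (z j) • e j := by
          rw [he]
          dsimp only
          rw [← lp.single_smul, smul_eq_mul, mul_one]
        rw [ContinuousLinearMap.comp_apply, hsingle, map_smul]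
        have : evalCLM p k ((z j) • T (e j)) = (z j) * (T (e j)) k := by
          rw [evalCLM_apply, coord_smul]
        rw [this]
        by_cases hj : j ∈ A
        · rw [hz j hj, zero_mul]
        · rw [hrow k hk j hj T hT, mul_zero]
      have h0 : HasSum (fun _ : ℕ => (0:ℝ)) (((evalCLM p k).comp T) z) := by
        rw [show (fun j : ℕ => ((evalCLM p k).comp T) (lp.single p j (z j)))
          = fun _ : ℕ => (0:ℝ) from funext hterm] at hsum
        exact hsum
      have h1 := h0.unique hasSum_zero
      rw [ContinuousLinearMap.comp_apply, evalCLM_apply] at h1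
      exact h1
  -- case split on reachability
  by_cases hSall : ∀ k, k ∈ Sreach
  · -- every coordinate is reachable: the row of i₀ vanishes identically
    have rows : ∀ T ∈ C, ∀ j, (T (e j)) i₀ = 0 := by
      intro T hT j
      by_contra hne
      obtain ⟨W, hWC, hWj⟩ := hSall j
      have hWpos : ∀ i, 0 ≤ (W.prod (e i₀)) i := wordPos W hWC _ (e_nonneg i₀)
      have hj' : 0 < (W.prod (e i₀)) j := lt_of_le_of_ne (hWpos j) (Ne.symm hWj)
      have hTj : 0 < (T (e j)) i₀ :=
        lt_of_le_of_ne (hpos T hT _ (e_nonneg j) i₀) (Ne.symm hne)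
      refine no_cycle ⟨T :: W, List.cons_ne_nil T W, ?_, ?_⟩
      · intro S hS
        rcases List.mem_cons.1 hS with h | h
        · exact h ▸ hT
        · exact hWC S h
      · rw [prod_cons_apply]
        have hst := wordStep [T] (fun S hS => (List.mem_singleton.1 hS) ▸ hT)
          (W.prod (e i₀)) hWpos j i₀
        rw [List.prod_singleton] at hst
        exact lt_of_lt_of_le (mul_pos hj' hTj) hst
    exact build {i₀}
      (fun k hk j hj T hT => by
        rw [Set.mem_singleton_iff] at hk
        rw [hk]
        exact rows T hT j)
      i₀ rfl (i₀ + 1) (by simp)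
  · push_neg at hSall
    obtain ⟨k₀, hk₀⟩ := hSall
    refine build Sreachᶜ ?_ k₀ hk₀ i₀ (fun h => h hi₀S)
    intro k hk j hj T hT
    rw [Set.mem_compl_iff] at hk
    rw [Set.notMem_compl_iff] at hj
    by_contra hne
    obtain ⟨W, hWC, hWj⟩ := hj
    have hWpos : ∀ i, 0 ≤ (W.prod (e i₀)) i := wordPos W hWC _ (e_nonneg i₀)
    have hj' : 0 < (W.prod (e i₀)) j := lt_of_le_of_ne (hWpos j) (Ne.symm hWj)
    have hTj : 0 < (T (e j)) k :=
      lt_of_le_of_ne (hpos T hT _ (e_nonneg j) k) (Ne.symm hne)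
    refine hk ⟨T :: W, ?_, ?_⟩
    · intro S hS
      rcases List.mem_cons.1 hS with h | h
      · exact h ▸ hT
      · exact hWC S h
    · rw [prod_cons_apply]
      have hst := wordStep [T] (fun S hS => (List.mem_singleton.1 hS) ▸ hT)
        (W.prod (e i₀)) hWpos j k
      rw [List.prod_singleton] at hst
      exact ne_of_gt (lt_of_lt_of_le (mul_pos hj' hTj) hst)
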